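/- For discrete random variables, if for every x with μ_X(x) > 0 the conditional distribution of Y given X = x depends only on η(x) (i.e., μ_{Y|X}(·|x) = μ_{Y|X}(·|x') whenever η(x) = η(x') and both have positive probability), then η(X) is information sufficient: I(X;Y) = I(η(X);Y). -/

import Mathlib

open Finset

noncomputable section

/-- Marginal distribution of the first coordinate of a joint distribution. -/
def margX {X Y : Type*} [Fintype Y] (μ : X → Y → ℝ) (x : X) : ℝ := ∑ y, μ x y

/-- Marginal distribution of the second coordinate. -/
def margY {X Y : Type*} [Fintype X] (μ : X → Y → ℝ) (y : Y) : ℝ := ∑ x, μ x y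

/-- Distribution of `U = η X`. -/
def margU {X Y U : Type*} [Fintype X] [Fintype Y] [DecidableEq U]
    (μ : X → Y → ℝ) (η : X → U) (u : U) : ℝ :=
  ∑ x, if η x = u then margX μ x else 0

/-- Joint probability `P(Y = y, η X = u)`. -/
def margYU {X Y U : Type*} [Fintype X] [DecidableEq U]
    (μ : X → Y → ℝ) (η : X → U) (y : Y) (u : U) : ℝ :=
  ∑ x, if η x = u then μ x y else 0

/-- Joint distribution of the pair `(η X, Y)`. -/
def jointUY {X Y U : Type*} [Fintype X] [DecidableEq U]
    (μ : X → Y → ℝ) (η : X → U) : U → Y → ℝ :=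
  fun u y => margYU μ η y u

/-- Shannon mutual information `I(X;Y)` of a joint distribution (natural log). -/
def MI {X Y : Type*} [Fintype X] [Fintype Y] (μ : X → Y → ℝ) : ℝ :=
  ∑ x, ∑ y, μ x y * Real.log (μ x y / (margX μ x * margY μ y))

/-- Conditional Shannon entropy `H(Y|X)`. -/
def condEnt {X Y : Type*} [Fintype X] [Fintype Y] (μ : X → Y → ℝ) : ℝ :=
  -∑ x, ∑ y, μ x y * Real.log (μ x y / margX μ x)

/-- Conditional mutual information `I(X;Y|U)` where `U = η X` is a deterministic
function of `X`. -/
def condMI {X Y U : Type*} [Fintype X] [Fintype Y] [DecidableEq U]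
    (μ : X → Y → ℝ) (η : X → U) : ℝ :=
  ∑ x, ∑ y, μ x y *
    Real.log (μ x y * margU μ η (η x) / (margX μ x * margYU μ η y (η x)))

/-- `μ` is a probability distribution on `X × Y`. -/
def IsDist {X Y : Type*} [Fintype X] [Fintype Y] (μ : X → Y → ℝ) : Prop :=
  (∀ x y, 0 ≤ μ x y) ∧ ∑ x, ∑ y, μ x y = 1

/-- `X` and `Y` are conditionally independent given `U = η X`: for every `u` with
`P(U = u) > 0`, `P(X = x, Y = y | U = u) = P(X = x | U = u) · P(Y = y | U = u)`
(stated multiplied through by `P(U = u)²`). -/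
def CondIndep {X Y U : Type*} [Fintype X] [Fintype Y] [DecidableEq U]
    (μ : X → Y → ℝ) (η : X → U) : Prop :=
  ∀ u, 0 < margU μ η u → ∀ x y,
    (if η x = u then μ x y else 0) * margU μ η u =
      (if η x = u then margX μ x else 0) * margYU μ η y u

/-- Cross-entropy risk `E_{(X,Y)∼μ}[− log v(Y|X)]` of a predictive conditional
distribution `v`. -/
def risk {X Y : Type*} [Fintype X] [Fintype Y] (μ : X → Y → ℝ) (v : X → Y → ℝ) : ℝ :=
  ∑ x, ∑ y, μ x y * (-Real.log (v x y))

/-- Kullback–Leibler divergence between two joint distributions on `X × Y`. -/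
def KL {X Y : Type*} [Fintype X] [Fintype Y] (μ ν : X → Y → ℝ) : ℝ :=
  ∑ x, ∑ y, μ x y * Real.log (μ x y / ν x y)

/-- Averaged conditional KL divergence `D(μ_{Y|X} ‖ v | μ_X)`. -/
def avgKL {X Y : Type*} [Fintype X] [Fintype Y] (μ : X → Y → ℝ) (v : X → Y → ℝ) : ℝ :=
  ∑ x, margX μ x * ∑ y,
    (μ x y / margX μ x) * Real.log ((μ x y / margX μ x) / v x y)

/-- Averaged conditional KL divergence in the latent domain:
`D(μ_{Y|U} ‖ v | μ_U)` for the encoder `η`. -/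
def decKL {X Y U : Type*} [Fintype X] [Fintype Y] [Fintype U] [DecidableEq U]
    (μ : X → Y → ℝ) (η : X → U) (v : U → Y → ℝ) : ℝ :=
  ∑ u, margU μ η u * ∑ y,
    (margYU μ η y u / margU μ η u) *
      Real.log ((margYU μ η y u / margU μ η u) / v u y)

lemma margX_nonneg' {X Y : Type*} [Fintype X] [Fintype Y] (μ : X → Y → ℝ)
    (hμ : ∀ x y, 0 ≤ μ x y) (x : X) : 0 ≤ margX μ x :=
  Finset.sum_nonneg fun y _ => hμ x y

lemma mu_eq_zero {X Y : Type*} [Fintype X] [Fintype Y] (μ : X → Y → ℝ)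
    (hμ : ∀ x y, 0 ≤ μ x y) (x : X) (hx : margX μ x = 0) (y : Y) : μ x y = 0 := by
  have := (Finset.sum_eq_zero_iff_of_nonneg (fun y _ => hμ x y)).mp hx
  exact this y (Finset.mem_univ y)

lemma margU_alt {X Y U : Type*} [Fintype X] [Fintype Y] [DecidableEq U]
    (μ : X → Y → ℝ) (η : X → U) (u : U) :
    margX (jointUY μ η) u = margU μ η u := by
  unfold margX jointUY margYU margU margX
  rw [Finset.sum_comm]
  refine Finset.sum_congr rfl fun x _ => ?_
  split <;> simp

lemma margY_alt {X Y U : Type*} [Fintype X] [Fintype Y] [Fintype U] [DecidableEq U]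
    (μ : X → Y → ℝ) (η : X → U) (y : Y) :
    margY (jointUY μ η) y = margY μ y := by
  unfold margY jointUY margYU
  rw [Finset.sum_comm]
  refine Finset.sum_congr rfl fun x _ => ?_
  exact Finset.sum_ite_eq Finset.univ (η x) (fun _ => μ x y) |>.trans (by simp)

lemma key_ratio {X Y U : Type*} [Fintype X] [Fintype Y] [Fintype U] [DecidableEq U]
    (μ : X → Y → ℝ) (η : X → U) (hμ : IsDist μ)
    (h : ∀ x x', η x = η x' → 0 < margX μ x → 0 < margX μ x' →
      ∀ y, μ x y / margX μ x = μ x' y / margX μ x')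
    (x : X) (hx : 0 < margX μ x) (y : Y) :
    μ x y / margX μ x = margYU μ η y (η x) / margU μ η (η x) := by
  have hU : 0 < margU μ η (η x) := by
    have hle : margX μ x ≤ margU μ η (η x) := by
      unfold margU
      have := Finset.single_le_sum (f := fun x' => if η x' = η x then margX μ x' else 0)
        (fun x' _ => by split
                        · exact margX_nonneg' μ hμ.1 x'
                        · exact le_rfl) (Finset.mem_univ x)
      simpa using this
    linarith
  have hYU : margYU μ η y (η x) = margU μ η (η x) * (μ x y / margX μ x) := by
    unfold margYU margU
    rw [Finset.sum_mul]
    refine Finset.sum_congr rfl fun x' _ => ?_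
    split
    · rename_i he
      by_cases hx' : margX μ x' = 0
      · rw [mu_eq_zero μ hμ.1 x' hx' y, hx']; ring
      · have hx'pos : 0 < margX μ x' :=
          lt_of_le_of_ne (margX_nonneg' μ hμ.1 x') (Ne.symm hx')
        have := h x' x he hx'pos hx y
        field_simp at this ⊢
        linarith [this]
    · ring
  rw [hYU, mul_comm, mul_div_assoc, div_self hU.ne', mul_one]

/-- if the conditional distribution of `Y` given `X = x` depends only
on `η(x)` (at points of positive probability), then `η(X)` is information
sufficient: `I(X;Y) = I(η(X);Y)`. -/
theorem stmt15 {X Y U : Type*} [Fintype X] [Fintype Y] [Fintype U] [DecidableEq U]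
    (μ : X → Y → ℝ) (η : X → U) (hμ : IsDist μ)
    (h : ∀ x x', η x = η x' → 0 < margX μ x → 0 < margX μ x' →
      ∀ y, μ x y / margX μ x = μ x' y / margX μ x') :
    MI μ = MI (jointUY μ η) := by
  set L : U → Y → ℝ :=
    fun u y => Real.log (margYU μ η y u / (margU μ η u * margY μ y)) with hL
  have key : ∀ x y, μ x y * Real.log (μ x y / (margX μ x * margY μ y)) =
      μ x y * L (η x) y := by
    intro x y
    by_cases hz : μ x y = 0
    · simp [hz]
    have hx : 0 < margX μ x := by
      rcases lt_or_eq_of_le (margX_nonneg' μ hμ.1 x) with hlt | heq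
      · exact hlt
      · exact absurd (mu_eq_zero μ hμ.1 x heq.symm y) hz
    have hr := key_ratio μ η hμ h x hx y
    congr 1
    rw [hL]
    congr 1
    rw [← div_div, ← div_div, hr]
  calc MI μ = ∑ x, ∑ y, μ x y * L (η x) y := by
        unfold MI
        exact Finset.sum_congr rfl fun x _ => Finset.sum_congr rfl fun y _ => key x y
    _ = ∑ x, ∑ y, ∑ u, if η x = u then μ x y * L u y else 0 := by
        refine Finset.sum_congr rfl fun x _ => Finset.sum_congr rfl fun y _ => ?_
        rw [Finset.sum_ite_eq]; simp
    _ = ∑ u, ∑ y, ∑ x, if η x = u then μ x y * L u y else 0 := by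
        rw [show (∑ x, ∑ y, ∑ u, if η x = u then μ x y * L u y else 0)
            = ∑ x, ∑ u, ∑ y, (if η x = u then μ x y * L u y else 0) from
          Finset.sum_congr rfl fun x _ => Finset.sum_comm]
        rw [Finset.sum_comm]
        exact Finset.sum_congr rfl fun u _ => Finset.sum_comm
    _ = ∑ u, ∑ y, margYU μ η y u * L u y := by
        refine Finset.sum_congr rfl fun u _ => Finset.sum_congr rfl fun y _ => ?_
        rw [margYU, Finset.sum_mul]
        exact Finset.sum_congr rfl fun x _ => by split <;> simp
    _ = MI (jointUY μ η) := by
        unfold MI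
        refine Finset.sum_congr rfl fun u _ => Finset.sum_congr rfl fun y _ => ?_
        rw [margU_alt, margY_alt, hL]
        rfl
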